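/- Let Λ be a family of partitions indexed by partitions of k with |Λ| := ∑_{λ⊢k}|Λ(λ)| < n. Then the number of k-partial permutations of n of type Λ with |d| = k|Λ| equals (n−|Λ|+m₁(Λ(1^k)) choose m₁(Λ(1^k))) times the size of the conjugacy class in B_{kn}^k indexed by the family Λ with Λ(1^k) replaced by Λ(1^k) ∪ (1^{n−|Λ|}). -/
import Mathlib


open Equiv Finset

namespace KWr

/-- The `i`-th block `p_k(i)` (0-indexed): elements `x ∈ [kn]` with `x / k = i`. -/
def pk (k n : ℕ) (i : ℕ) : Finset (Fin (k * n)) :=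
  Finset.univ.filter (fun x => (x : ℕ) / k = i)

/-- `w` maps every block onto some block. -/
def IsBlockPerm (k n : ℕ) (w : Perm (Fin (k * n))) : Prop :=
  ∀ i : Fin n, ∃ j : Fin n, (pk k n (i : ℕ)).image w = pk k n (j : ℕ)

theorem isBlockPerm_one (k n : ℕ) : IsBlockPerm k n 1 := fun i =>
  ⟨i, by simp [pk]⟩

theorem isBlockPerm_mul (k n : ℕ) {a b : Perm (Fin (k * n))}
    (ha : IsBlockPerm k n a) (hb : IsBlockPerm k n b) : IsBlockPerm k n (a * b) := by
  intro i
  obtain ⟨j, hj⟩ := hb i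
  obtain ⟨l, hl⟩ := ha j
  refine ⟨l, ?_⟩
  rw [← hl, ← hj, Finset.image_image]
  rfl

theorem isBlockPerm_pow (k n : ℕ) {a : Perm (Fin (k * n))} (ha : IsBlockPerm k n a) :
    ∀ m : ℕ, IsBlockPerm k n (a ^ m) := by
  intro m
  induction m with
  | zero => simpa using isBlockPerm_one k n
  | succ m ih => rw [pow_succ]; exact isBlockPerm_mul k n ih ha

/-- The group `B_{kn}^k` of block permutations, as a subgroup of `S_{kn}`. -/
def Bgrp (k n : ℕ) : Subgroup (Perm (Fin (k * n))) where
  carrier := {w | IsBlockPerm k n w}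
  one_mem' := isBlockPerm_one k n
  mul_mem' := fun ha hb => isBlockPerm_mul k n ha hb
  inv_mem' := by
    intro a ha
    have ho : 0 < orderOf a := orderOf_pos a
    have h1 : a⁻¹ = a ^ (orderOf a - 1) := by
      have h : a ^ (orderOf a - 1) * a = 1 := by
        rw [← pow_succ, Nat.sub_add_cancel ho, pow_orderOf_eq_one]
      exact inv_eq_of_mul_eq_one_left h
    show IsBlockPerm k n a⁻¹
    rw [h1]
    exact isBlockPerm_pow k n ha _

/-- The first element of the `i`-th block. -/
def elemIn (k n : ℕ) (hk : 0 < k) (i : Fin n) : Fin (k * n) :=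
  ⟨(i : ℕ) * k, by
    calc (i : ℕ) * k < n * k := by
          exact Nat.mul_lt_mul_of_lt_of_le i.2 (le_refl k) hk
      _ = k * n := Nat.mul_comm n k⟩

/-- The map induced by `w` on block indices. -/
def blockMap (k n : ℕ) (hk : 0 < k) (w : Perm (Fin (k * n))) (i : Fin n) : Fin n :=
  ⟨((w (elemIn k n hk i)) : ℕ) / k, by
    refine (Nat.div_lt_iff_lt_mul hk).mpr ?_
    calc ((w (elemIn k n hk i)) : ℕ) < k * n := (w (elemIn k n hk i)).2
      _ = n * k := Nat.mul_comm k n⟩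

/-- The permutation `p_w` of block indices induced by a block permutation `w`. -/
noncomputable def pPerm (k n : ℕ) (hk : 0 < k) (w : Perm (Fin (k * n))) : Perm (Fin n) :=
  if h : Function.Bijective (blockMap k n hk w) then Equiv.ofBijective _ h else 1

/-- Length of the cycle of `i` under `p`. -/
noncomputable def cycLen {n : ℕ} (p : Perm (Fin n)) (i : Fin n) : ℕ := Function.minimalPeriod p i

/-- The `a`-th element of the `i`-th block. -/
def inBlock (k n : ℕ) (hk : 0 < k) (i : Fin n) (a : Fin k) : Fin (k * n) :=
  ⟨(i : ℕ) * k + (a : ℕ), by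
    calc (i : ℕ) * k + (a : ℕ) < (i : ℕ) * k + k := Nat.add_lt_add_left a.2 _
      _ = ((i : ℕ) + 1) * k := by ring
      _ ≤ n * k := Nat.mul_le_mul_right k i.2
      _ = k * n := Nat.mul_comm n k⟩

/-- The cycle product of `w` at the block `i`: the return map of `w` on the block `i`,
viewed as a permutation of `Fin k`. -/
noncomputable def cycProd (k n : ℕ) (hk : 0 < k) (w : Perm (Fin (k * n))) (i : Fin n) :
    Perm (Fin k) :=
  if h : Function.Bijective (fun a : Fin k =>
      (⟨((w ^ cycLen (pPerm k n hk w) i) (inBlock k n hk i a) : ℕ) % k,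
        Nat.mod_lt _ hk⟩ : Fin k))
  then Equiv.ofBijective _ h else 1

/-- The partition `(1^k)` of `k`. -/
def onePartition (k : ℕ) : Nat.Partition k where
  parts := Multiset.replicate k 1
  parts_pos := fun {i} hi => by rw [Multiset.eq_of_mem_replicate hi]; exact one_pos
  parts_sum := by simp

-- The type of a block permutation `w` of `[kn]`: for each partition `ρ` of `k`, the
-- multiset `tyFam k n hk w ρ` collects, over all cycles of the induced block permutation
-- `p_w` whose cycle product has cycle type `ρ`, the length of the cycle.
open scoped Classical in
noncomputable def tyFam (k n : ℕ) (hk : 0 < k) (w : Perm (Fin (k * n)))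
    (ρ : Nat.Partition k) : Multiset ℕ :=
  (Finset.univ.filter (fun i : Fin n =>
      (∀ j : Fin n, (pPerm k n hk w).SameCycle i j → i ≤ j) ∧
      (cycProd k n hk w i).partition.parts = ρ.parts)).val.map
    (fun i => cycLen (pPerm k n hk w) i)

/-- Total size of a family of partitions indexed by the partitions of `k`. -/
noncomputable def famSize (k : ℕ) (Λ : Nat.Partition k → Multiset ℕ) : ℕ :=
  ∑ ρ : Nat.Partition k, (Λ ρ).sum

-- Complete a family of partitions `Λ` to total size `n` by adding parts `1`
-- to the component indexed by `(1^k)`.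
open scoped Classical in
noncomputable def ExtFam (k n : ℕ) (Λ : Nat.Partition k → Multiset ℕ) :
    Nat.Partition k → Multiset ℕ := fun ρ =>
  if ρ = onePartition k then Λ ρ + Multiset.replicate (n - famSize k Λ) 1 else Λ ρ

/-- `z_λ = ∏ r, r^{m_r(λ)} m_r(λ)!` for a partition given as a multiset of parts. -/
def zOf (m : Multiset ℕ) : ℕ :=
  ∏ r ∈ m.toFinset, r ^ m.count r * Nat.factorial (m.count r)

/-- `Z_Λ = ∏_{λ ⊢ k} z_{Λ(λ)} z_λ^{l(Λ(λ))}`. -/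
noncomputable def ZFam (k : ℕ) (Λ : Nat.Partition k → Multiset ℕ) : ℕ :=
  ∏ ρ : Nat.Partition k, zOf (Λ ρ) * zOf ρ.parts ^ (Multiset.card (Λ ρ))

/-- A `k`-partial permutation of `n`, encoded as a pair `(s, w)` where `s` is the set of
block indices of `d` and `w` is the extension of `ω` to `[kn]` by the identity:
`w` is a block permutation fixing pointwise every block outside `s`. -/
def IsKPP (k n : ℕ) (pr : Finset (Fin n) × Perm (Fin (k * n))) : Prop :=
  IsBlockPerm k n pr.2 ∧
    ∀ x : Fin (k * n), (¬ ∃ i ∈ pr.1, (x : ℕ) / k = (i : ℕ)) → pr.2 x = x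

/-- The set of `k`-partial permutations of `n`. -/
def KPP (k n : ℕ) : Type := {pr : Finset (Fin n) × Perm (Fin (k * n)) // IsKPP k n pr}

/-- The action `σ · (d, ω) = (σ(d), σωσ⁻¹)` on (the underlying data of)
`k`-partial permutations. -/
noncomputable def actKPP (k n : ℕ) (hk : 0 < k) (σ : Perm (Fin (k * n)))
    (pr : Finset (Fin n) × Perm (Fin (k * n))) : Finset (Fin n) × Perm (Fin (k * n)) :=
  (pr.1.image (fun i => pPerm k n hk σ i), σ * pr.2 * σ⁻¹)

/-- A `k`-partial permutation `(d, ω)` has type `Λ` (a family of partitions indexed by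
the partitions of `k`) iff `d` consists of `|Λ|` blocks and the type of `ω` is `Λ`;
in terms of the global extension `w`, the type of `w` is `Λ` completed with
`n - |Λ|` parts equal to `1` in the component `(1^k)`. -/
def HasTypeKPP (k n : ℕ) (hk : 0 < k) (p : KPP k n)
    (Λ : Nat.Partition k → Multiset ℕ) : Prop :=
  p.val.1.card = famSize k Λ ∧ ∀ ρ, tyFam k n hk p.val.2 ρ = ExtFam k n Λ ρ

/-- `deg₁(d, ω)`: the number of blocks of `d` plus the number of blocks of `d` on which
`ω` acts as the identity. -/
def deg1 (k n : ℕ) (pr : Finset (Fin n) × Perm (Fin (k * n))) : ℕ :=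
  pr.1.card +
    (pr.1.filter (fun i : Fin n => ∀ x : Fin (k * n), (x : ℕ) / k = (i : ℕ) → pr.2 x = x)).card


/-- The automorphism of `S_k^n` permuting coordinates by `σ`. -/
def permCoordAut (k n : ℕ) (σ : Perm (Fin n)) : MulAut (Fin n → Perm (Fin k)) where
  toFun f := f ∘ σ.symm
  invFun f := f ∘ σ
  left_inv f := by funext i; simp
  right_inv f := by funext i; simp
  map_mul' f g := rfl

/-- The action of `S_n` on `S_k^n` permuting coordinates, as a homomorphism. -/
def permCoordHom (k n : ℕ) : Perm (Fin n) →* MulAut (Fin n → Perm (Fin k)) where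
  toFun := permCoordAut k n
  map_one' := by apply MulEquiv.ext; intro f; rfl
  map_mul' σ τ := by apply MulEquiv.ext; intro f; rfl

-- The class sum, in the group algebra of `S_n`, of the permutations of cycle type `m`.
open scoped Classical in
noncomputable def CS (n : ℕ) (m : Multiset ℕ) : MonoidAlgebra ℂ (Perm (Fin n)) :=
  ∑ σ ∈ Finset.univ.filter (fun σ : Perm (Fin n) => σ.partition.parts = m),
    MonoidAlgebra.of ℂ (Perm (Fin n)) σ

theorem twoPos : (0 : ℕ) < 2 := by norm_num

-- The class sum, in the group algebra of the hyperoctahedral group `B_{2n}^2`, of the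
-- conjugacy class indexed by the bipartition `(l1, l2)` of `n`, where `l1` corresponds
-- to the partition `(1,1)` of `2` and `l2` to the partition `(2)`.
open scoped Classical in
noncomputable def CB (n : ℕ) (l1 l2 : Multiset ℕ) : MonoidAlgebra ℂ (Bgrp 2 n) :=
  ∑ w ∈ Finset.univ.filter (fun w : Bgrp 2 n =>
      tyFam 2 n twoPos (w : Perm (Fin (2 * n))) (onePartition 2) = l1 ∧
      tyFam 2 n twoPos (w : Perm (Fin (2 * n))) (Nat.Partition.indiscrete 2) = l2),
    MonoidAlgebra.of ℂ (Bgrp 2 n) w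


section Aux

variable {k n : ℕ}

theorem mem_pk {x : Fin (k * n)} {i : ℕ} : x ∈ pk k n i ↔ (x : ℕ) / k = i := by
  simp [pk]

theorem elemIn_mem (hk : 0 < k) (i : Fin n) : elemIn k n hk i ∈ pk k n (i : ℕ) := by
  simp [mem_pk, elemIn, Nat.mul_div_cancel _ hk]

theorem inBlock_mem (hk : 0 < k) (i : Fin n) (a : Fin k) :
    inBlock k n hk i a ∈ pk k n (i : ℕ) := by
  simp only [mem_pk, inBlock]
  rw [Nat.mul_comm, Nat.mul_add_div hk, Nat.div_eq_of_lt a.2, Nat.add_zero]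

theorem mem_pk_iff_eq_inBlock (hk : 0 < k) {x : Fin (k * n)} {i : Fin n}
    (hx : x ∈ pk k n (i : ℕ)) : x = inBlock k n hk i ⟨(x : ℕ) % k, Nat.mod_lt _ hk⟩ := by
  rw [mem_pk] at hx
  apply Fin.ext
  simp only [inBlock]
  conv_lhs => rw [← Nat.div_add_mod (x : ℕ) k]
  rw [hx, Nat.mul_comm]

theorem inBlock_val_mod (hk : 0 < k) (i : Fin n) (a : Fin k) :
    ((inBlock k n hk i a : Fin (k * n)) : ℕ) % k = (a : ℕ) := by
  simp only [inBlock]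
  rw [Nat.mul_comm, Nat.mul_add_mod, Nat.mod_eq_of_lt a.2]

theorem image_pk_eq (hk : 0 < k) {w : Perm (Fin (k * n))} (hw : IsBlockPerm k n w)
    (i : Fin n) : (pk k n (i : ℕ)).image w = pk k n ((blockMap k n hk w i : Fin n) : ℕ) := by
  obtain ⟨j, hj⟩ := hw i
  have hmem : w (elemIn k n hk i) ∈ pk k n (j : ℕ) := by
    rw [← hj]; exact Finset.mem_image_of_mem _ (elemIn_mem hk i)
  rw [mem_pk] at hmem
  have : (blockMap k n hk w i : Fin n) = j := Fin.ext (by simp [blockMap, hmem])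
  rw [this, hj]

theorem blockMap_injective (hk : 0 < k) {w : Perm (Fin (k * n))} (hw : IsBlockPerm k n w) :
    Function.Injective (blockMap k n hk w) := by
  intro i i' h
  have h1 : (pk k n (i : ℕ)).image w = (pk k n (i' : ℕ)).image w := by
    rw [image_pk_eq hk hw, image_pk_eq hk hw, h]
  have h2 : elemIn k n hk i ∈ pk k n (i' : ℕ) := by
    have : w (elemIn k n hk i) ∈ (pk k n (i' : ℕ)).image w := by
      rw [← h1]; exact Finset.mem_image_of_mem _ (elemIn_mem hk i)
    obtain ⟨y, hy, hyw⟩ := Finset.mem_image.mp this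
    rwa [← w.injective hyw]
  have h3 := mem_pk.mp h2
  have h4 := mem_pk.mp (elemIn_mem hk i)
  exact Fin.ext (h4 ▸ h3)

theorem blockMap_bijective (hk : 0 < k) {w : Perm (Fin (k * n))} (hw : IsBlockPerm k n w) :
    Function.Bijective (blockMap k n hk w) :=
  Finite.injective_iff_bijective.mp (blockMap_injective hk hw)

theorem pPerm_apply (hk : 0 < k) {w : Perm (Fin (k * n))} (hw : IsBlockPerm k n w)
    (i : Fin n) : pPerm k n hk w i = blockMap k n hk w i := by
  rw [pPerm, dif_pos (blockMap_bijective hk hw)]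
  rfl

theorem image_pk_pPerm (hk : 0 < k) {w : Perm (Fin (k * n))} (hw : IsBlockPerm k n w)
    (i : Fin n) :
    (pk k n (i : ℕ)).image w = pk k n ((pPerm k n hk w i : Fin n) : ℕ) := by
  rw [pPerm_apply hk hw, image_pk_eq hk hw]

end Aux
section Aux2

variable {k n : ℕ}

/-- Block `i` is pointwise fixed by `w`. -/
def PFix (k n : ℕ) (w : Perm (Fin (k * n))) (i : Fin n) : Prop :=
  ∀ x : Fin (k * n), (x : ℕ) / k = (i : ℕ) → w x = x

theorem pfix_pPerm (hk : 0 < k) {w : Perm (Fin (k * n))} (hw : IsBlockPerm k n w)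
    {i : Fin n} (h : PFix k n w i) : pPerm k n hk w i = i := by
  rw [pPerm_apply hk hw]
  have h1 : w (elemIn k n hk i) = elemIn k n hk i := h _ (mem_pk.mp (elemIn_mem hk i))
  apply Fin.ext
  simp only [blockMap, h1]
  exact mem_pk.mp (elemIn_mem hk i)

theorem cycLen_eq_one (hk : 0 < k) {w : Perm (Fin (k * n))} {i : Fin n}
    (hi : pPerm k n hk w i = i) : cycLen (pPerm k n hk w) i = 1 :=
  Function.minimalPeriod_eq_one_iff_isFixedPt.mpr hi

theorem w_inBlock_mem (hk : 0 < k) {w : Perm (Fin (k * n))} (hw : IsBlockPerm k n w)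
    {i : Fin n} (hi : pPerm k n hk w i = i) (a : Fin k) :
    w (inBlock k n hk i a) ∈ pk k n (i : ℕ) := by
  have := image_pk_pPerm hk hw i
  rw [hi] at this
  rw [← this]
  exact Finset.mem_image_of_mem _ (inBlock_mem hk i a)

theorem cycProd_eq (hk : 0 < k) {w : Perm (Fin (k * n))} (hw : IsBlockPerm k n w)
    {i : Fin n} (hi : pPerm k n hk w i = i) :
    ∀ a : Fin k, w (inBlock k n hk i a) =
      inBlock k n hk i (cycProd k n hk w i a) := by
  have hL : cycLen (pPerm k n hk w) i = 1 := cycLen_eq_one hk hi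
  have hg : ∀ a : Fin k, w (inBlock k n hk i a) = inBlock k n hk i
      ⟨((w (inBlock k n hk i a)) : ℕ) % k, Nat.mod_lt _ hk⟩ := fun a =>
    mem_pk_iff_eq_inBlock hk (w_inBlock_mem hk hw hi a)
  have hinj : Function.Injective (fun a : Fin k =>
      (⟨((w ^ cycLen (pPerm k n hk w) i) (inBlock k n hk i a) : ℕ) % k,
        Nat.mod_lt _ hk⟩ : Fin k)) := by
    intro a b hab
    simp only [hL, pow_one] at hab
    have : w (inBlock k n hk i a) = w (inBlock k n hk i b) := by
      rw [hg a, hg b, hab]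
    have h2 := w.injective this
    have h3 : (i : ℕ) * k + (a : ℕ) = (i : ℕ) * k + (b : ℕ) := congrArg Fin.val h2
    exact Fin.ext (Nat.add_left_cancel h3)
  have hb := Finite.injective_iff_bijective.mp hinj
  intro a
  rw [cycProd, dif_pos hb]
  have : (Equiv.ofBijective _ hb) a = (⟨((w ^ cycLen (pPerm k n hk w) i)
      (inBlock k n hk i a) : ℕ) % k, Nat.mod_lt _ hk⟩ : Fin k) := rfl
  rw [this]
  simp only [hL, pow_one]
  exact hg a

theorem pfix_iff (hk : 0 < k) {w : Perm (Fin (k * n))} (hw : IsBlockPerm k n w)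
    (i : Fin n) : PFix k n w i ↔ pPerm k n hk w i = i ∧ cycProd k n hk w i = 1 := by
  constructor
  · intro h
    have hi := pfix_pPerm hk hw h
    refine ⟨hi, ?_⟩
    have hc := cycProd_eq hk hw hi
    apply Equiv.ext
    intro a
    have h1 : w (inBlock k n hk i a) = inBlock k n hk i a :=
      h _ (mem_pk.mp (inBlock_mem hk i a))
    have h2 := (hc a).symm.trans h1
    have h3 : (i : ℕ) * k + ((cycProd k n hk w i a : Fin k) : ℕ) =
        (i : ℕ) * k + (a : ℕ) := congrArg Fin.val h2
    simpa using Fin.ext (Nat.add_left_cancel h3)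
  · rintro ⟨hi, hc⟩
    intro x hx
    have hxm : x ∈ pk k n (i : ℕ) := mem_pk.mpr hx
    have hxe := mem_pk_iff_eq_inBlock hk hxm
    rw [hxe, cycProd_eq hk hw hi, hc]
    rfl

theorem perm_partition_eq_one_iff {m : ℕ} (σ : Perm (Fin m)) :
    σ.partition.parts = Multiset.replicate m 1 ↔ σ = 1 := by
  constructor
  · intro h
    have hct : σ.cycleType = 0 := by
      rw [Multiset.eq_zero_iff_forall_notMem]
      intro r hr
      have hr2 := Equiv.Perm.two_le_of_mem_cycleType hr
      have hmem : r ∈ σ.partition.parts := by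
        rw [Equiv.Perm.parts_partition]
        exact Multiset.mem_add.mpr (Or.inl hr)
      rw [h] at hmem
      have := Multiset.eq_of_mem_replicate hmem
      omega
    exact Equiv.Perm.cycleType_eq_zero.mp hct
  · intro h
    subst h
    rw [Equiv.Perm.parts_partition]
    simp

theorem sameCycle_fixed {m : ℕ} {p : Perm (Fin m)} {i j : Fin m}
    (hi : p i = i) (h : p.SameCycle i j) : i = j := by
  obtain ⟨t, ht⟩ := h
  rw [← ht]
  exact (Function.IsFixedPt.perm_zpow hi t).symm

theorem tyFam_cond_iff (hk : 0 < k) {w : Perm (Fin (k * n))} (hw : IsBlockPerm k n w)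
    (i : Fin n) :
    (((∀ j : Fin n, (pPerm k n hk w).SameCycle i j → i ≤ j) ∧
      (cycProd k n hk w i).partition.parts = (onePartition k).parts) ∧
      cycLen (pPerm k n hk w) i = 1) ↔ PFix k n w i := by
  have hone : (onePartition k).parts = Multiset.replicate k 1 := rfl
  constructor
  · rintro ⟨⟨_, hpart⟩, hlen⟩
    have hi : pPerm k n hk w i = i :=
      Function.minimalPeriod_eq_one_iff_isFixedPt.mp hlen
    have hc : cycProd k n hk w i = 1 := by
      rw [← perm_partition_eq_one_iff]
      rw [hpart, hone]
    exact (pfix_iff hk hw i).mpr ⟨hi, hc⟩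
  · intro h
    obtain ⟨hi, hc⟩ := (pfix_iff hk hw i).mp h
    refine ⟨⟨fun j hj => (sameCycle_fixed hi hj).le, ?_⟩, cycLen_eq_one hk hi⟩
    rw [hc, hone, Equiv.Perm.parts_partition]
    simp

end Aux2
section Aux3

variable {k n : ℕ}

open scoped Classical in
theorem card_pfix (hk : 0 < k) {w : Perm (Fin (k * n))} (hw : IsBlockPerm k n w)
    {Λ : Nat.Partition k → Multiset ℕ}
    (hty : tyFam k n hk w (onePartition k) = ExtFam k n Λ (onePartition k)) :
    (Finset.univ.filter (PFix k n w)).card =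
      (Λ (onePartition k)).count 1 + (n - famSize k Λ) := by
  classical
  have h1 := congrArg (Multiset.count 1) hty
  rw [tyFam, Multiset.count_map, ← Finset.filter_val, Finset.filter_filter] at h1
  rw [ExtFam, if_pos rfl, Multiset.count_add, Multiset.count_replicate, if_pos rfl] at h1
  have h3 : (Finset.univ.filter fun i : Fin n =>
      ((∀ j : Fin n, (pPerm k n hk w).SameCycle i j → i ≤ j) ∧
        (cycProd k n hk w i).partition.parts = (onePartition k).parts) ∧
        1 = cycLen (pPerm k n hk w) i) = Finset.univ.filter (PFix k n w) := by
    apply Finset.filter_congr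
    intro i _
    constructor
    · rintro ⟨hc, hl⟩
      exact (tyFam_cond_iff hk hw i).mp ⟨hc, hl.symm⟩
    · intro h
      have hc := (tyFam_cond_iff hk hw i).mpr h
      exact ⟨hc.1, hc.2.symm⟩
  rw [show ∀ s : Finset (Fin n), Multiset.card s.val = s.card from fun _ => rfl, h3] at h1
  exact h1

theorem count_one_le_sum (m : Multiset ℕ) : m.count 1 ≤ m.sum := by
  induction m using Multiset.induction with
  | empty => simp
  | cons a s ih =>
    rw [Multiset.count_cons, Multiset.sum_cons]
    split <;> omega

theorem sum_le_famSize {Λ : Nat.Partition k → Multiset ℕ} (ρ : Nat.Partition k) :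
    (Λ ρ).sum ≤ famSize k Λ := by
  unfold famSize
  exact Finset.single_le_sum (f := fun ρ => (Λ ρ).sum) (fun _ _ => Nat.zero_le _) (Finset.mem_univ ρ)

theorem card_filter_superset {α : Type*} [Fintype α] [DecidableEq α]
    (T : Finset α) (F : ℕ) (hTF : T.card ≤ F) :
    ((Finset.univ : Finset (Finset α)).filter (fun s => T ⊆ s ∧ s.card = F)).card =
      (Fintype.card α - T.card).choose (F - T.card) := by
  classical
  rw [← Finset.card_compl T, ← Finset.card_powersetCard (F - T.card) Tᶜ]
  apply Finset.card_bij' (i := fun s _ => s \ T) (j := fun t _ => t ∪ T)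
  · intro s hs
    rw [Finset.mem_filter] at hs
    obtain ⟨_, hTs, hcard⟩ := hs
    rw [Finset.mem_powersetCard]
    constructor
    · intro x hx
      rw [Finset.mem_sdiff] at hx
      exact Finset.mem_compl.mpr hx.2
    · rw [Finset.card_sdiff_of_subset hTs, hcard]
  · intro t ht
    rw [Finset.mem_powersetCard] at ht
    obtain ⟨hsub, hcard⟩ := ht
    rw [Finset.mem_filter]
    have hdisj : Disjoint t T := by
      rw [Finset.disjoint_left]
      intro x hx hxT
      exact Finset.mem_compl.mp (hsub hx) hxT
    refine ⟨Finset.mem_univ _, Finset.subset_union_right, ?_⟩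
    rw [Finset.card_union_of_disjoint hdisj, hcard, Nat.sub_add_cancel hTF]
  · intro s hs
    rw [Finset.mem_filter] at hs
    exact Finset.sdiff_union_of_subset hs.2.1
  · intro t ht
    rw [Finset.mem_powersetCard] at ht
    have hdisj : Disjoint t T := by
      rw [Finset.disjoint_left]
      intro x hx hxT
      exact Finset.mem_compl.mp (ht.1 hx) hxT
    rw [Finset.union_sdiff_distrib, Finset.sdiff_self, Finset.union_empty,
      Finset.sdiff_eq_self_of_disjoint hdisj]

end Aux3
/-- For a family of partitions `Λ` with `|Λ| < n`, the number of `k`-partial permutations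
of `n` of type `Λ` (with support of `|Λ|` blocks) equals
`(n - |Λ| + m₁(Λ(1^k)) choose m₁(Λ(1^k)))` times the size of the conjugacy class of
`B_{kn}^k` indexed by `Λ` completed with parts `1` in the component `(1^k)`. -/
theorem card_KPP_type (k n : ℕ) (hk : 0 < k) (Λ : Nat.Partition k → Multiset ℕ)
    (hpos : ∀ ρ, ∀ x ∈ Λ ρ, 0 < x) (hsize : famSize k Λ < n) :
    Nat.card {p : KPP k n // HasTypeKPP k n hk p Λ} =
      Nat.choose (n - famSize k Λ + (Λ (onePartition k)).count 1)
          ((Λ (onePartition k)).count 1) *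
        Nat.card {w : Perm (Fin (k * n)) //
          IsBlockPerm k n w ∧ ∀ ρ, tyFam k n hk w ρ = ExtFam k n Λ ρ} := by
  classical
  set F := famSize k Λ with hF
  set m1 := (Λ (onePartition k)).count 1 with hm1
  have hm1F : m1 ≤ F := le_trans (count_one_le_sum _) (sum_le_famSize _)
  set C := (n - F + m1).choose m1 with hC
  -- the predicate on pairs
  set Q : Finset (Fin n) × Perm (Fin (k * n)) → Prop := fun pr =>
    IsKPP k n pr ∧ pr.1.card = F ∧ ∀ ρ, tyFam k n hk pr.2 ρ = ExtFam k n Λ ρ with hQ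
  set R : Perm (Fin (k * n)) → Prop := fun w =>
    IsBlockPerm k n w ∧ ∀ ρ, tyFam k n hk w ρ = ExtFam k n Λ ρ with hR
  have e1 : {p : KPP k n // HasTypeKPP k n hk p Λ} ≃ {pr // Q pr} :=
    Equiv.subtypeSubtypeEquivSubtypeInter (IsKPP k n)
      (fun pr => pr.1.card = F ∧ ∀ ρ, tyFam k n hk pr.2 ρ = ExtFam k n Λ ρ)
  have c1 : Nat.card {p : KPP k n // HasTypeKPP k n hk p Λ} =
      (Finset.univ.filter Q).card := by
    rw [Nat.card_congr e1, Nat.card_eq_fintype_card, Fintype.card_subtype]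
  have c2 : Nat.card {w : Perm (Fin (k * n)) // R w} = (Finset.univ.filter R).card := by
    rw [Nat.card_eq_fintype_card, Fintype.card_subtype]
  rw [c1, c2]
  set S := Finset.univ.filter Q with hS
  set W := Finset.univ.filter R with hW
  have hmem : ∀ pr ∈ S, pr.2 ∈ W := by
    intro pr hpr
    rw [hS, Finset.mem_filter] at hpr
    rw [hW, Finset.mem_filter]
    exact ⟨Finset.mem_univ _, hpr.2.1.1, hpr.2.2.2⟩
  rw [Finset.card_eq_sum_card_fiberwise hmem]
  have hfiber : ∀ w ∈ W, (S.filter fun pr => pr.2 = w).card = C := by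
    intro w hwW
    rw [hW, Finset.mem_filter] at hwW
    obtain ⟨-, hwb, hwty⟩ := hwW
    set T : Finset (Fin n) := Finset.univ.filter (fun i => ¬ PFix k n w i) with hT
    have hPcard : (Finset.univ.filter (PFix k n w)).card = m1 + (n - F) :=
      card_pfix hk hwb (hwty (onePartition k))
    have hsum : (Finset.univ.filter (PFix k n w)).card + T.card = n := by
      rw [hT, Finset.card_filter_add_card_filter_not, Finset.card_univ,
        Fintype.card_fin]
    have hTcard : T.card = F - m1 := by omega
    have key : (S.filter fun pr => pr.2 = w).card =
        ((Finset.univ : Finset (Finset (Fin n))).filter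
          (fun s => T ⊆ s ∧ s.card = F)).card := by
      refine Finset.card_bij' (fun pr _ => pr.1) (fun s _ => (s, w)) ?_ ?_ ?_ (fun s _ => rfl)
      · intro pr hpr
        rw [Finset.mem_filter] at hpr
        obtain ⟨hprS, hpr2⟩ := hpr
        rw [hS, Finset.mem_filter] at hprS
        obtain ⟨-, hkpp, hcard, -⟩ := hprS
        rw [Finset.mem_filter]
        refine ⟨Finset.mem_univ _, ?_, hcard⟩
        intro i hi
        rw [hT, Finset.mem_filter] at hi
        by_contra hnot
        apply hi.2
        intro x hx
        have hne : ¬ ∃ j ∈ pr.1, (x : ℕ) / k = (j : ℕ) := by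
          rintro ⟨j, hj, hjx⟩
          have : j = i := Fin.ext (by rw [← hjx, hx])
          exact hnot (this ▸ hj)
        have := hkpp.2 x hne
        rwa [hpr2] at this
      · intro s hs
        rw [Finset.mem_filter] at hs
        obtain ⟨-, hTs, hcard⟩ := hs
        rw [Finset.mem_filter]
        refine ⟨?_, rfl⟩
        rw [hS, Finset.mem_filter]
        refine ⟨Finset.mem_univ _, ⟨hwb, ?_⟩, hcard, hwty⟩
        intro x hx
        have hlt : (x : ℕ) / k < n := by
          refine (Nat.div_lt_iff_lt_mul hk).mpr ?_
          calc (x : ℕ) < k * n := x.2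
            _ = n * k := Nat.mul_comm k n
        set i0 : Fin n := ⟨(x : ℕ) / k, hlt⟩ with hi0
        have hi0s : i0 ∉ s := fun h => hx ⟨i0, h, rfl⟩
        have hi0T : i0 ∉ T := fun h => hi0s (hTs h)
        rw [hT, Finset.mem_filter] at hi0T
        push_neg at hi0T
        exact hi0T (Finset.mem_univ _) x rfl
      · intro pr hpr
        rw [Finset.mem_filter] at hpr
        obtain ⟨_, h2⟩ := hpr
        exact Prod.ext rfl h2.symm
    rw [key, card_filter_superset T F (hTcard ▸ Nat.sub_le F m1), hTcard,
      Fintype.card_fin]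
    have h1 : n - (F - m1) = n - F + m1 := by omega
    have h2 : F - (F - m1) = m1 := by omega
    rw [h1, h2]
  rw [Finset.sum_congr rfl hfiber, Finset.sum_const, smul_eq_mul, Nat.mul_comm]

end KWr
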